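/- Let n, q be integers with 1 ≤ n ≤ q, let f_n, …, f_q be nonnegative real numbers not all zero, and set Λ(ρ) = Σ_{k=n}^q f_k ρ^k for ρ > 0. Let 0 < γ_1 ≤ γ_2 and let V : (0, ∞) → (0, ∞) be a measurable function with γ_1 Λ(ρ) ≤ V(ρ) ≤ γ_2 Λ(ρ) for every ρ > 0. Then for all a, b with 0 < a < b/2 one has ∫_a^b ρ / V(ρ) dρ ≥ C · a² / V(a), where C = 2^{2(1−q)} γ_1 / γ_2. -/

import Mathlib

open MeasureTheory

/-- Proposition 5.3 (abstract form): if `V` is comparable to the polynomial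
`Λ(ρ) = Σ_{k=n}^q f_k ρ^k` with nonnegative coefficients, not all zero, then
`∫_a^b ρ/V(ρ) dρ ≥ C a²/V(a)` for `0 < a < b/2`, with `C = 2^{2(1−q)} γ₁/γ₂`. -/
theorem stmt9 (n q : ℕ) (hn : 1 ≤ n) (hnq : n ≤ q)
    (f : ℕ → ℝ) (hf : ∀ k, 0 ≤ f k) (hfne : ∃ k, n ≤ k ∧ k ≤ q ∧ f k ≠ 0)
    (γ₁ γ₂ : ℝ) (hγ1 : 0 < γ₁) (hγ12 : γ₁ ≤ γ₂)
    (V : ℝ → ℝ) (hVpos : ∀ ρ : ℝ, 0 < ρ → 0 < V ρ) (hVmeas : Measurable V)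
    (hV : ∀ ρ : ℝ, 0 < ρ →
      γ₁ * (∑ k ∈ Finset.Icc n q, f k * ρ ^ k) ≤ V ρ ∧
      V ρ ≤ γ₂ * (∑ k ∈ Finset.Icc n q, f k * ρ ^ k))
    (a b : ℝ) (ha : 0 < a) (hab : a < b / 2) :
    (2 : ℝ) ^ (2 * (1 - (q : ℝ))) * γ₁ / γ₂ * (a ^ 2 / V a)
      ≤ ∫ ρ in a..b, ρ / V ρ := by
  have hγ2 : 0 < γ₂ := lt_of_lt_of_le hγ1 hγ12
  have hb0 : 0 < b := by linarith
  have h2ab : 2 * a < b := by linarith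
  have hab' : a < b := by linarith
  set Λ : ℝ → ℝ := fun ρ => ∑ k ∈ Finset.Icc n q, f k * ρ ^ k with hΛdef
  have hΛpos : ∀ ρ : ℝ, 0 < ρ → 0 < Λ ρ := by
    intro ρ hρ
    obtain ⟨k, hk1, hk2, hk3⟩ := hfne
    refine Finset.sum_pos' (fun i _ => by have := hf i; positivity)
      ⟨k, Finset.mem_Icc.2 ⟨hk1, hk2⟩, ?_⟩
    have hfk : 0 < f k := lt_of_le_of_ne (hf k) (Ne.symm hk3)
    positivity
  -- monotonicity of Λ on positives
  have hΛmono : ∀ x y : ℝ, 0 < x → x ≤ y → Λ x ≤ Λ y := by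
    intro x y hx hxy
    refine Finset.sum_le_sum fun i _ => ?_
    exact mul_le_mul_of_nonneg_left (pow_le_pow_left₀ hx.le hxy i) (hf i)
  have hΛa := hΛpos a ha
  set g : ℝ → ℝ := fun ρ => ρ / V ρ with hgdef
  have hgmeas : Measurable g := measurable_id.div hVmeas
  -- uniform bound on [a,b]
  set M : ℝ := b / (γ₁ * Λ a) with hMdef
  have hbound : ∀ ρ ∈ Set.Icc a b, ρ / V ρ ≤ M := by
    intro ρ hρ
    have hρ0 : 0 < ρ := lt_of_lt_of_le ha hρ.1
    have h1 : γ₁ * Λ ρ ≤ V ρ := (hV ρ hρ0).1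
    have h2 : Λ a ≤ Λ ρ := hΛmono a ρ ha hρ.1
    have hVρ := hVpos ρ hρ0
    rw [hMdef, div_le_div_iff₀ hVρ (by positivity)]
    nlinarith [mul_le_mul_of_nonneg_left h2 hγ1.le, hρ.2, hρ0.le]
  have hgnonneg : ∀ ρ ∈ Set.Icc a b, 0 ≤ ρ / V ρ := by
    intro ρ hρ
    have hρ0 : 0 < ρ := lt_of_lt_of_le ha hρ.1
    exact div_nonneg hρ0.le (hVpos ρ hρ0).le
  -- integrability on Icc a b
  have hIntOn : IntegrableOn g (Set.Icc a b) volume := by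
    apply Measure.integrableOn_of_bounded (measure_Icc_lt_top).ne
      hgmeas.aestronglyMeasurable
    filter_upwards [ae_restrict_mem measurableSet_Icc] with ρ hρ
    rw [Real.norm_eq_abs, abs_of_nonneg (hgnonneg ρ hρ)]
    exact hbound ρ hρ
  have hII : ∀ c d : ℝ, a ≤ c → c ≤ d → d ≤ b → IntervalIntegrable g volume c d := by
    intro c d h1 h2 h3
    exact (hIntOn.mono_set (by rw [Set.uIcc_of_le h2]; exact Set.Icc_subset_Icc h1 h3)).intervalIntegrable
  -- pointwise lower bound on [a, 2a]
  set m : ℝ := 2 * a * γ₁ / (2 ^ q * γ₂ * V a) with hmdef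
  have hVa := hVpos a ha
  have hkey : ∀ ρ ∈ Set.Icc a (2 * a), m ≤ ρ / V ρ := by
    intro ρ hρ
    have hρ0 : 0 < ρ := lt_of_lt_of_le ha hρ.1
    have hVρ := hVpos ρ hρ0
    have hΛρ := hΛpos ρ hρ0
    have h2 : V ρ ≤ γ₂ * Λ ρ := (hV ρ hρ0).2
    -- Λ ρ * (2a) ≤ Λ (2a) * ρ
    have hstep1 : Λ ρ * (2 * a) ≤ Λ (2 * a) * ρ := by
      rw [hΛdef]
      simp only [Finset.sum_mul]
      refine Finset.sum_le_sum fun k hk => ?_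
      obtain ⟨hk1, hk2⟩ := Finset.mem_Icc.1 hk
      have hk0 : 1 ≤ k := le_trans hn hk1
      obtain ⟨j, rfl⟩ := Nat.exists_eq_add_of_le hk0
      have hρle : ρ ≤ 2 * a := hρ.2
      have : ρ ^ j ≤ (2 * a) ^ j := pow_le_pow_left₀ hρ0.le hρle j
      have hfk := hf (1 + j)
      calc f (1 + j) * ρ ^ (1 + j) * (2 * a)
          = f (1 + j) * (ρ ^ j * (2 * a)) * ρ := by ring
        _ ≤ f (1 + j) * ((2 * a) ^ j * (2 * a)) * ρ := by
            have h2a : (0:ℝ) ≤ 2 * a := by linarith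
            exact mul_le_mul_of_nonneg_right (mul_le_mul_of_nonneg_left
              (mul_le_mul_of_nonneg_right this h2a) hfk) hρ0.le
        _ = f (1 + j) * (2 * a) ^ (1 + j) * ρ := by ring
    -- Λ (2a) ≤ 2^q * Λ a
    have hstep2 : Λ (2 * a) ≤ 2 ^ q * Λ a := by
      rw [hΛdef]
      simp only [Finset.mul_sum]
      refine Finset.sum_le_sum fun k hk => ?_
      obtain ⟨hk1, hk2⟩ := Finset.mem_Icc.1 hk
      have h2k : (2:ℝ) ^ k ≤ 2 ^ q := pow_le_pow_right₀ one_le_two hk2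
      have hfk := hf k
      have hak : (0:ℝ) ≤ a ^ k := by positivity
      calc f k * (2 * a) ^ k = f k * (2 ^ k * a ^ k) := by rw [mul_pow]
        _ ≤ f k * (2 ^ q * a ^ k) :=
            mul_le_mul_of_nonneg_left (mul_le_mul_of_nonneg_right h2k hak) hfk
        _ = 2 ^ q * (f k * a ^ k) := by ring
    have h1a : γ₁ * Λ a ≤ V a := (hV a ha).1
    -- chain: m ≤ 2a/(γ₂ * 2^q * Λ a) ≤ 2a/(γ₂ * Λ(2a)) ≤ ρ/(γ₂ * Λ ρ) ≤ ρ / V ρ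
    have hΛ2a := hΛpos (2 * a) (by linarith)
    have c1 : m ≤ 2 * a / (γ₂ * (2 ^ q * Λ a)) := by
      rw [hmdef, div_le_div_iff₀ (by positivity) (by positivity)]
      have : Λ a ≤ V a / γ₁ := by rw [le_div_iff₀ hγ1]; linarith
      nlinarith [mul_le_mul_of_nonneg_left h1a
        (show (0:ℝ) ≤ 2 * a * (2 ^ q * γ₂) by positivity)]
    have c2 : 2 * a / (γ₂ * (2 ^ q * Λ a)) ≤ 2 * a / (γ₂ * Λ (2 * a)) := by
      apply div_le_div_of_nonneg_left (by linarith) (by positivity)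
      exact mul_le_mul_of_nonneg_left hstep2 hγ2.le
    have c3 : 2 * a / (γ₂ * Λ (2 * a)) ≤ ρ / (γ₂ * Λ ρ) := by
      rw [div_le_div_iff₀ (by positivity) (by positivity)]
      nlinarith
    have c4 : ρ / (γ₂ * Λ ρ) ≤ ρ / V ρ := by
      apply div_le_div_of_nonneg_left hρ0.le hVρ h2
    linarith
  -- splitting the integral
  have hInt1 := hII a (2 * a) le_rfl (by linarith) (by linarith)
  have hInt2 := hII (2 * a) b (by linarith) (by linarith) le_rfl
  have hsplit : ∫ ρ in a..b, g ρ = (∫ ρ in a..(2*a), g ρ) + ∫ ρ in (2*a)..b, g ρ :=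
    (intervalIntegral.integral_add_adjacent_intervals hInt1 hInt2).symm
  have hI2 : 0 ≤ ∫ ρ in (2*a)..b, g ρ := by
    apply intervalIntegral.integral_nonneg (by linarith)
    intro ρ hρ
    exact hgnonneg ρ ⟨by linarith [hρ.1], hρ.2⟩
  have hI1 : m * a ≤ ∫ ρ in a..(2*a), g ρ := by
    have := intervalIntegral.integral_mono_on (μ := volume) (by linarith : a ≤ 2*a)
      (intervalIntegrable_const (c := m)) hInt1 hkey
    rw [intervalIntegral.integral_const] at this
    calc m * a = (2*a - a) • m := by rw [smul_eq_mul]; ring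
      _ ≤ _ := this
  -- arithmetic: LHS ≤ m * a
  have hfinal : (2 : ℝ) ^ (2 * (1 - (q : ℝ))) * γ₁ / γ₂ * (a ^ 2 / V a) ≤ m * a := by
    have hrpow : (2 : ℝ) ^ (2 * (1 - (q : ℝ))) ≤ 2 / 2 ^ q := by
      have h1 : (2 : ℝ) ^ (2 * (1 - (q : ℝ))) ≤ 2 ^ ((1 : ℝ) - q) := by
        apply Real.rpow_le_rpow_of_exponent_le one_le_two
        have : (1:ℝ) ≤ q := by exact_mod_cast le_trans hn hnq
        linarith
      have h2 : (2:ℝ) ^ ((1:ℝ) - q) = 2 / 2 ^ q := by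
        rw [Real.rpow_sub two_pos, Real.rpow_one, Real.rpow_natCast]
      linarith
    have hma : m * a = 2 / 2 ^ q * γ₁ / γ₂ * (a ^ 2 / V a) := by
      rw [hmdef]; field_simp
    rw [hma]
    have h2q : (0:ℝ) < 2 ^ q := by positivity
    have hpos : 0 ≤ γ₁ / γ₂ * (a ^ 2 / V a) := by positivity
    calc (2 : ℝ) ^ (2 * (1 - (q : ℝ))) * γ₁ / γ₂ * (a ^ 2 / V a)
        = (2 : ℝ) ^ (2 * (1 - (q : ℝ))) * (γ₁ / γ₂ * (a ^ 2 / V a)) := by ring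
      _ ≤ 2 / 2 ^ q * (γ₁ / γ₂ * (a ^ 2 / V a)) := mul_le_mul_of_nonneg_right hrpow hpos
      _ = 2 / 2 ^ q * γ₁ / γ₂ * (a ^ 2 / V a) := by ring
  calc (2 : ℝ) ^ (2 * (1 - (q : ℝ))) * γ₁ / γ₂ * (a ^ 2 / V a) ≤ m * a := hfinal
    _ ≤ ∫ ρ in a..(2*a), g ρ := hI1
    _ ≤ ∫ ρ in a..b, g ρ := by rw [hsplit]; linarith
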